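/- For all δ ≥ −1 and β > 1: ((β−1)/β)·((1+δ)^β − 1) ≥ (1+δ)^{β−1} − 1. -/

import Mathlib

/-- For all δ ≥ −1 and β > 1: ((β−1)/β)·((1+δ)^β − 1) ≥ (1+δ)^{β−1} − 1. -/
theorem pow_ineq_one (δ β : ℝ) (hδ : -1 ≤ δ) (hβ : 1 < β) :
    (1 + δ) ^ (β - 1) - 1 ≤ (β - 1) / β * ((1 + δ) ^ β - 1) := by
  set x := 1 + δ with hx
  have hx0 : 0 ≤ x := by simp [hx]; linarith
  have hβ0 : 0 < β := by linarith
  have hw : (β - 1) / β + 1 / β = 1 := by field_simp; ring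
  have h := Real.geom_mean_le_arith_mean2_weighted
    (div_nonneg (by linarith) hβ0.le) (by positivity : (0:ℝ) ≤ 1 / β)
    (Real.rpow_nonneg hx0 β) zero_le_one hw
  have key : (x ^ β) ^ ((β - 1) / β) = x ^ (β - 1) := by
    rw [← Real.rpow_mul hx0]
    congr 1
    field_simp
  rw [key, Real.one_rpow, mul_one, mul_one] at h
  have : (β - 1) / β * (x ^ β - 1) = (β - 1) / β * x ^ β - (β - 1) / β := by ring
  linarith
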